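/- Let a, b ∈ ℝ and let (x, y) ∈ ℝ² satisfy x² + y² = 1 and −x + 1 − y + a − a·y = 0 (so P = (x, y) lies on the unit circle and on the line through B = (0,1) and C = (1+a, 0)), and assume (x, y) ≠ (0, 1). Then the points A = (−1, 0), P = (x, y) and D = (1+a, b) are collinear (i.e., −2y + b + b·x − a·y = 0) if and only if a = b or a = −2. -/
import Mathlib


/-- Real version: if P = (x,y) lies on the unit circle and on the line through
B = (0,1) and C = (1+a,0), and P ≠ B, then A = (−1,0), P, D = (1+a,b) are collinear
iff a = b or a = −2. -/
theorem stmt_14 (a b x y : ℝ)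
    (hcirc : x ^ 2 + y ^ 2 = 1)
    (hline : -x + 1 - y + a - a * y = 0)
    (hP : (x, y) ≠ ((0 : ℝ), (1 : ℝ))) :
    -2 * y + b + b * x - a * y = 0 ↔ a = b ∨ a = -2 := by
  have hy1 : y ≠ 1 := by
    intro h
    apply hP
    subst h
    have hx0 : x = 0 := by nlinarith [sq_nonneg x]
    simp [hx0]
  have hx : x = (1 + a) * (1 - y) := by nlinarith [hline]
  have hfac : (1 - y) * ((1 + a) ^ 2 * (1 - y) - (1 + y)) = 0 := by
    linear_combination hcirc - (x + (1 + a) * (1 - y)) * hx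
  have hy1' : (1 : ℝ) - y ≠ 0 := fun h => hy1 (by linarith)
  have hkey : y * (a ^ 2 + 2 * a + 2) = a ^ 2 + 2 * a := by
    have h2 := (mul_eq_zero.mp hfac).resolve_left hy1'
    nlinarith [h2]
  have hxD : x * (a ^ 2 + 2 * a + 2) = 2 * (1 + a) := by
    rw [hx]; nlinarith [hkey]
  have hD : a ^ 2 + 2 * a + 2 > 0 := by nlinarith [sq_nonneg (a + 1)]
  have hid : (-2 * y + b + b * x - a * y) * (a ^ 2 + 2 * a + 2)
      = (a + 2) ^ 2 * (b - a) := by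
    linear_combination (-2 - a) * hkey + b * hxD
  constructor
  · intro h
    have h0 : (a + 2) ^ 2 * (b - a) = 0 := by rw [← hid, h, zero_mul]
    rcases mul_eq_zero.mp h0 with h1 | h1
    · right; have := pow_eq_zero_iff (n := 2) (by norm_num) |>.mp h1; linarith
    · left; linarith
  · intro h
    have h0 : (a + 2) ^ 2 * (b - a) = 0 := by
      rcases h with h | h <;> subst h <;> ring
    have := hid.trans h0
    exact (mul_eq_zero.mp this).resolve_right (by positivity)
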